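/- For every n : ℕ and all a, b in the level-(n+1) set Set.range (E^[n+1]), level-(n+1) addition of a and b equals the (L^[n] b)-fold Fadd-n-sum of copies of a: Fadd (n+1) a b = (fun c => Fadd n a c)^[(L^[n]) b] (E^[n] 0). (This encodes the paper's Lemma that a [n:1] b equals b-many copies of a combined with the level-(n-1) addition.) -/
import Mathlib


/-- The exponential function `E a = w ^ a` on ℕ, for a fixed base `w`. -/
def E (w : ℕ) (a : ℕ) : ℕ := w ^ a

/-- Bennett's commutative hyperoperation `F_n` (level-`n` addition):
`Fadd w n a b = E^[n] (L^[n] a + L^[n] b)` where `L = Nat.log w`. -/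
def Fadd (w : ℕ) (n : ℕ) (a b : ℕ) : ℕ :=
  (E w)^[n] ((Nat.log w)^[n] a + (Nat.log w)^[n] b)

/-- Bennett's commutative hyperoperation `F_{n+1}` (level-`n` multiplication):
`Fmul w n a b = E^[n] (L^[n] a * L^[n] b)` where `L = Nat.log w`. -/
def Fmul (w : ℕ) (n : ℕ) (a b : ℕ) : ℕ :=
  (E w)^[n] ((Nat.log w)^[n] a * (Nat.log w)^[n] b)

lemma log_E (w : ℕ) (hw : 2 ≤ w) (a : ℕ) : Nat.log w (E w a) = a := by
  simpa [E] using Nat.log_pow (by omega : 1 < w) a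

lemma logIter_EIter (w : ℕ) (hw : 2 ≤ w) (n a : ℕ) :
    (Nat.log w)^[n] ((E w)^[n] a) = a :=
  Function.LeftInverse.iterate (log_E w hw) n a

/-- For `a`, `b` in the level-`(n+1)` set, level-`(n+1)` addition of `a` and `b`
is the `(L^[n] b)`-fold `Fadd n`-sum of copies of `a`. -/
theorem Fadd_succ_eq_iterate (w : ℕ) (hw : 2 ≤ w) (n : ℕ) :
    ∀ a ∈ Set.range ((E w)^[n+1]), ∀ b ∈ Set.range ((E w)^[n+1]),
      Fadd w (n+1) a b = (fun c => Fadd w n a c)^[(Nat.log w)^[n] b] ((E w)^[n] 0) := by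
  rintro a ⟨x, rfl⟩ b ⟨y, rfl⟩
  have hL : ∀ m, (Nat.log w)^[n] ((E w)^[n] m) = m := logIter_EIter w hw n
  have hLa : (Nat.log w)^[n] ((E w)^[n+1] x) = E w x := by
    rw [Function.iterate_succ_apply, hL]
  have hLb : (Nat.log w)^[n] ((E w)^[n+1] y) = E w y := by
    rw [Function.iterate_succ_apply, hL]
  have key : ∀ k : ℕ, (fun c => Fadd w n ((E w)^[n+1] x) c)^[k] ((E w)^[n] 0)
      = (E w)^[n] (k * E w x) := by
    intro k
    induction k with
    | zero => simp
    | succ k ih =>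
      rw [Function.iterate_succ_apply', ih]
      simp only [Fadd, hLa, hL]
      ring_nf
  rw [hLb, key]
  simp only [Fadd]
  rw [logIter_EIter w hw (n+1), logIter_EIter w hw (n+1), Function.iterate_succ_apply]
  congr 1
  simp [E, pow_add, mul_comm]
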